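/- Under the hypotheses of the tracker trajectory statement (i.e., $O, L : [0,\infty) \to \mathbb{R}^{m\times m}$ differentiable with $L(t)$ diagonal, $O(t)$ orthogonal, $\dot L(t) = U(t)$, $\dot O(t) = O(t)\Omega(t)$, where $X(t) = O(t)^\top \exp(L(t)) O(t)$, $B_1(t) = \exp(L(t)) - O(t) K^* O(t)^\top$, $B_2(t) = X(t) K^{*\top} - K^{*\top} X(t)$, $U(t) = -K_U \exp(-L(t))\,\mathrm{diag}(B_1(t))$ with $K_U$ diagonal with nonnegative entries, and $\Omega(t) = \mathcal{K}((B_2(t)-B_2(t)^\top)/2)$ with $\mathcal{K}$ linear, skew-preserving, and positive semidefinite for the Frobenius inner product), suppose in addition that $K^*$ is symmetric and that $X(0) = K^*$. Then $X(t) = K^*$ for all $t \ge 0$; that is, the equilibrium $\tilde K = K^* - X = 0$ is invariant under the tracker dynamics. -/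

import Mathlib

open Matrix

attribute [local instance] Matrix.frobeniusNormedAddCommGroup Matrix.frobeniusNormedSpace
  Matrix.frobeniusNormedRing Matrix.frobeniusNormedAlgebra

section Stmt14Aux

variable {m : ℕ}

/-- Evaluation of a matrix entry as a continuous linear map. -/
noncomputable def stmt14_entryCLM (i j : Fin m) : Matrix (Fin m) (Fin m) ℝ →L[ℝ] ℝ :=
  LinearMap.toContinuousLinearMap
    { toFun := fun M => M i j
      map_add' := fun _ _ => rfl
      map_smul' := fun _ _ => rfl }

@[simp] lemma stmt14_entryCLM_apply (i j : Fin m) (M : Matrix (Fin m) (Fin m) ℝ) :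
    stmt14_entryCLM i j M = M i j := rfl

/-- Transpose as a continuous linear map. -/
noncomputable def stmt14_transposeCLM :
    Matrix (Fin m) (Fin m) ℝ →L[ℝ] Matrix (Fin m) (Fin m) ℝ :=
  LinearMap.toContinuousLinearMap
    ((Matrix.transposeLinearEquiv (Fin m) (Fin m) ℝ ℝ) : _ →ₗ[ℝ] _)

@[simp] lemma stmt14_transposeCLM_apply (M : Matrix (Fin m) (Fin m) ℝ) :
    stmt14_transposeCLM M = Mᵀ := rfl

/-- Trace as a continuous linear map. -/
noncomputable def stmt14_traceCLM : Matrix (Fin m) (Fin m) ℝ →L[ℝ] ℝ :=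
  LinearMap.toContinuousLinearMap (Matrix.traceLinearMap (Fin m) ℝ ℝ)

@[simp] lemma stmt14_traceCLM_apply (M : Matrix (Fin m) (Fin m) ℝ) :
    stmt14_traceCLM M = M.trace := rfl

lemma stmt14_exp_isDiag {M : Matrix (Fin m) (Fin m) ℝ} (h : M.IsDiag) :
    NormedSpace.exp M = Matrix.diagonal (fun i => Real.exp (M i i)) := by
  conv_lhs => rw [← h.diagonal_diag]
  rw [Matrix.exp_diagonal, Pi.exp_def]
  congr 1 with i
  rw [← Real.exp_eq_exp_ℝ]
  rfl

lemma stmt14_diagonal_eq_sum (v : Fin m → ℝ) :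
    Matrix.diagonal v = ∑ i, v i • Matrix.single i i (1 : ℝ) := by
  ext a b
  rw [Matrix.sum_apply]
  by_cases hab : a = b
  · subst hab
    rw [Matrix.diagonal_apply_eq]
    rw [Finset.sum_eq_single a]
    · simp [Matrix.single]
    · intro i _ hi
      simp [Matrix.single, hi]
    · simp
  · rw [Matrix.diagonal_apply_ne _ hab]
    symm
    apply Finset.sum_eq_zero
    intro i _
    simp only [Matrix.smul_apply, Matrix.single, Matrix.of_apply, smul_eq_mul]
    rw [if_neg]
    · ring
    · rintro ⟨rfl, rfl⟩
      exact hab rfl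

lemma stmt14_trace_mul_diagonal (M : Matrix (Fin m) (Fin m) ℝ) (v : Fin m → ℝ) :
    (M * Matrix.diagonal v).trace = ∑ i, M i i * v i := by
  simp [Matrix.trace, Matrix.diag, Matrix.mul_diagonal]

lemma stmt14_trace_transpose_mul_self_nonneg (A : Matrix (Fin m) (Fin m) ℝ) :
    0 ≤ (Aᵀ * A).trace := by
  rw [Matrix.trace]
  refine Finset.sum_nonneg fun i _ => ?_
  rw [Matrix.diag_apply, Matrix.mul_apply]
  exact Finset.sum_nonneg fun j _ => mul_self_nonneg _

lemma stmt14_eq_zero_of_trace (A : Matrix (Fin m) (Fin m) ℝ) (h : (Aᵀ * A).trace = 0) :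
    A = 0 := by
  ext j i
  have h' : ∀ i ∈ Finset.univ, (0:ℝ) ≤ (Aᵀ * A).diag i := by
    intro i _
    rw [Matrix.diag_apply, Matrix.mul_apply]
    exact Finset.sum_nonneg fun j _ => mul_self_nonneg _
  rw [Matrix.trace] at h
  have h2 := (Finset.sum_eq_zero_iff_of_nonneg h').mp h i (Finset.mem_univ i)
  rw [Matrix.diag_apply, Matrix.mul_apply] at h2
  have h3 : ∀ j ∈ Finset.univ, (0:ℝ) ≤ Aᵀ i j * A j i := fun j _ => mul_self_nonneg _
  have h4 := (Finset.sum_eq_zero_iff_of_nonneg h3).mp h2 j (Finset.mem_univ j)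
  have h5 : A j i * A j i = 0 := h4
  simpa using mul_self_eq_zero.mp h5

lemma stmt14_exp_mul_exp_neg (x : ℝ) : Real.exp x * Real.exp (-x) = 1 := by
  rw [← Real.exp_add, add_neg_cancel, Real.exp_zero]

end Stmt14Aux

/-- if `K*` is symmetric and `X(0) = K*`, then along the tracker
dynamics `X(t) = K*` for all `t ≥ 0`; the equilibrium `K* - X = 0` is invariant. -/
theorem stmt_14 (m : ℕ) (hm : 0 < m)
    (Kstar : Matrix (Fin m) (Fin m) ℝ) (hKsymm : Kstar.IsSymm)
    (KU : Matrix (Fin m) (Fin m) ℝ) (hKU : KU.IsDiag) (hKUpos : ∀ i, 0 ≤ KU i i)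
    (𝒦 : Matrix (Fin m) (Fin m) ℝ →ₗ[ℝ] Matrix (Fin m) (Fin m) ℝ)
    (h𝒦skew : ∀ A : Matrix (Fin m) (Fin m) ℝ, Aᵀ = -A → (𝒦 A)ᵀ = -(𝒦 A))
    (h𝒦psd : ∀ A : Matrix (Fin m) (Fin m) ℝ, 0 ≤ (Aᵀ * 𝒦 A).trace)
    (O L X B1 B2 U Ω : ℝ → Matrix (Fin m) (Fin m) ℝ)
    (hLdiag : ∀ t ∈ Set.Ici (0 : ℝ), (L t).IsDiag)
    (hOorth : ∀ t ∈ Set.Ici (0 : ℝ), O t * (O t)ᵀ = 1)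
    (hX : ∀ t, X t = (O t)ᵀ * NormedSpace.exp (L t) * O t)
    (hB1 : ∀ t, B1 t = NormedSpace.exp (L t) - O t * Kstar * (O t)ᵀ)
    (hB2 : ∀ t, B2 t = X t * Kstarᵀ - Kstarᵀ * X t)
    (hU : ∀ t, U t = -(KU * NormedSpace.exp (-L t) * Matrix.diagonal (B1 t).diag))
    (hΩ : ∀ t, Ω t = 𝒦 ((1 / 2 : ℝ) • (B2 t - (B2 t)ᵀ)))
    (hL : ∀ t ∈ Set.Ici (0 : ℝ), HasDerivWithinAt L (U t) (Set.Ici (0 : ℝ)) t)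
    (hO : ∀ t ∈ Set.Ici (0 : ℝ), HasDerivWithinAt O (O t * Ω t) (Set.Ici (0 : ℝ)) t)
    (hX0 : X 0 = Kstar) :
    ∀ t ∈ Set.Ici (0 : ℝ), X t = Kstar := by
  classical
  -- diagonal form of `exp (L t)` on `Ici 0`
  have hEdiag : ∀ t ∈ Set.Ici (0 : ℝ),
      NormedSpace.exp (L t) = Matrix.diagonal (fun i => Real.exp (L t i i)) :=
    fun t ht => stmt14_exp_isDiag (hLdiag t ht)
  -- diagonal form of `U t` on `Ici 0`
  have hUt : ∀ t ∈ Set.Ici (0 : ℝ), U t =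
      Matrix.diagonal (fun i => -(KU i i * Real.exp (-(L t i i)) * B1 t i i)) := by
    intro t ht
    have hnL : NormedSpace.exp (-L t)
        = Matrix.diagonal (fun i => Real.exp (-(L t i i))) := by
      have h := stmt14_exp_isDiag (hLdiag t ht).neg
      simpa using h
    rw [hU, hnL]
    ext i j
    rw [Matrix.neg_apply, Matrix.mul_diagonal, Matrix.mul_diagonal]
    by_cases hij : i = j
    · subst hij
      rw [Matrix.diagonal_apply_eq]
      rfl
    · rw [Matrix.diagonal_apply_ne _ hij, hKU hij]
      ring
  -- derivative of `exp (L ·)`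
  have hEd : ∀ t ∈ Set.Ici (0 : ℝ), HasDerivWithinAt (fun s => NormedSpace.exp (L s))
      (NormedSpace.exp (L t) * U t) (Set.Ici (0 : ℝ)) t := by
    intro t ht
    have hsum : HasDerivWithinAt
        (fun s => ∑ i, Real.exp (L s i i) • Matrix.single i i (1 : ℝ))
        (∑ i, (Real.exp (L t i i) * U t i i) • Matrix.single i i (1 : ℝ))
        (Set.Ici (0 : ℝ)) t := by
      apply HasDerivWithinAt.fun_sum
      intro i _
      have hentry : HasDerivWithinAt (fun s => L s i i) (U t i i) (Set.Ici (0 : ℝ)) t := by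
        have h := (stmt14_entryCLM i i).hasFDerivAt.comp_hasDerivWithinAt t (hL t ht)
        exact h
      exact (hentry.exp).smul_const _
    have hval : NormedSpace.exp (L t) * U t
        = ∑ i, (Real.exp (L t i i) * U t i i) • Matrix.single i i (1 : ℝ) := by
      rw [← stmt14_diagonal_eq_sum, hEdiag t ht]
      rw [hUt t ht, Matrix.diagonal_mul_diagonal]
      simp
    rw [hval]
    apply hsum.congr
    · intro s hs
      rw [hEdiag s hs, stmt14_diagonal_eq_sum]
    · rw [hEdiag t ht, stmt14_diagonal_eq_sum]
  -- the derivative of X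
  set X' : ℝ → Matrix (Fin m) (Fin m) ℝ := fun t =>
    ((O t * Ω t)ᵀ * NormedSpace.exp (L t) + (O t)ᵀ * (NormedSpace.exp (L t) * U t)) * O t
      + (O t)ᵀ * NormedSpace.exp (L t) * (O t * Ω t) with hX'def
  have hXd : ∀ t ∈ Set.Ici (0 : ℝ), HasDerivWithinAt X (X' t) (Set.Ici (0 : ℝ)) t := by
    intro t ht
    have hOT : HasDerivWithinAt (fun s => (O s)ᵀ) (O t * Ω t)ᵀ (Set.Ici (0 : ℝ)) t := by
      have h := stmt14_transposeCLM.hasFDerivAt.comp_hasDerivWithinAt t (hO t ht)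
      exact h
    have h1 := (hOT.mul (hEd t ht)).mul (hO t ht)
    exact h1.congr (fun s _ => hX s) (hX t)
  -- the Lyapunov function and its derivative
  set V : ℝ → ℝ := fun s => ((Kstar - X s)ᵀ * (Kstar - X s)).trace with hVdef
  set v' : ℝ → ℝ := fun t =>
    ((-(X' t))ᵀ * (Kstar - X t) + (Kstar - X t)ᵀ * (-(X' t))).trace with hv'def
  have hVd : ∀ t ∈ Set.Ici (0 : ℝ), HasDerivWithinAt V (v' t) (Set.Ici (0 : ℝ)) t := by
    intro t ht
    have hKt : HasDerivWithinAt (fun s => Kstar - X s) (-(X' t)) (Set.Ici (0 : ℝ)) t :=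
      (hXd t ht).const_sub Kstar
    have hKtT : HasDerivWithinAt (fun s => (Kstar - X s)ᵀ) (-(X' t))ᵀ (Set.Ici (0 : ℝ)) t := by
      have h := stmt14_transposeCLM.hasFDerivAt.comp_hasDerivWithinAt t hKt
      exact h
    have hprod := hKtT.mul hKt
    have h := stmt14_traceCLM.hasFDerivAt.comp_hasDerivWithinAt t hprod
    exact h
  -- the key inequality
  have key : ∀ t ∈ Set.Ici (0 : ℝ), 0 ≤ ((Kstar - X t)ᵀ * X' t).trace := by
    intro t ht
    have hA : O t * (O t)ᵀ = 1 := hOorth t ht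
    have hKs : Kstarᵀ = Kstar := hKsymm
    have hEsymm : (NormedSpace.exp (L t))ᵀ = NormedSpace.exp (L t) := by
      rw [hEdiag t ht, Matrix.diagonal_transpose]
    have hXs : (X t)ᵀ = X t := by
      rw [hX]
      simp only [Matrix.transpose_mul, Matrix.transpose_transpose, hEsymm, Matrix.mul_assoc]
    have hKts : (Kstar - X t)ᵀ = Kstar - X t := by
      rw [Matrix.transpose_sub, hKs, hXs]
    have hB2s : (B2 t)ᵀ = -(B2 t) := by
      rw [hB2, Matrix.transpose_sub, Matrix.transpose_mul, Matrix.transpose_mul,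
        Matrix.transpose_transpose, hKs, hXs]
      abel
    have hWt : Ω t = 𝒦 (B2 t) := by
      rw [hΩ, hB2s, sub_neg_eq_add, ← two_smul ℝ, smul_smul]
      norm_num
    have hWs : (Ω t)ᵀ = -(Ω t) := by rw [hWt]; exact h𝒦skew _ hB2s
    -- decompose X'
    have hX'eq : X' t = (Ω t)ᵀ * X t + (O t)ᵀ * (NormedSpace.exp (L t) * U t) * O t
        + X t * Ω t := by
      rw [hX'def, hX]
      simp only [Matrix.transpose_mul, Matrix.add_mul, Matrix.mul_assoc]
    rw [hKts, hX'eq, Matrix.mul_add, Matrix.mul_add, Matrix.trace_add, Matrix.trace_add]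
    -- the rotation part
    have hrot : ((Kstar - X t) * ((Ω t)ᵀ * X t)).trace
        + ((Kstar - X t) * (X t * Ω t)).trace
        = ((B2 t)ᵀ * 𝒦 (B2 t)).trace := by
      rw [← hWt, hWs]
      have e1 : (Kstar - X t) * (-(Ω t) * X t) = -((Kstar - X t) * Ω t * X t) := by
        rw [Matrix.neg_mul, Matrix.mul_neg, Matrix.mul_assoc]
      rw [e1, Matrix.trace_neg]
      have e2 : ((Kstar - X t) * Ω t * X t).trace
          = (X t * (Kstar - X t) * Ω t).trace := by
        rw [Matrix.trace_mul_cycle]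
      have e3 : ((Kstar - X t) * (X t * Ω t)).trace
          = ((Kstar - X t) * X t * Ω t).trace := by
        rw [Matrix.mul_assoc]
      rw [e2, e3]
      have e4 : (((Kstar - X t) * X t - X t * (Kstar - X t)) * Ω t).trace
          = ((Kstar - X t) * X t * Ω t).trace - (X t * (Kstar - X t) * Ω t).trace := by
        rw [Matrix.sub_mul, Matrix.trace_sub]
      have e5 : (Kstar - X t) * X t - X t * (Kstar - X t) = (B2 t)ᵀ := by
        rw [hB2s, hB2, hKs]
        simp only [Matrix.sub_mul, Matrix.mul_sub]
        abel
      rw [e5] at e4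
      linarith [e4]
    -- the diagonal part
    have hdiagpart : ((Kstar - X t) * ((O t)ᵀ * (NormedSpace.exp (L t) * U t) * O t)).trace
        = ∑ i, KU i i * (B1 t i i) ^ 2 := by
      have r1 : ((Kstar - X t) * ((O t)ᵀ * (NormedSpace.exp (L t) * U t) * O t)).trace
          = (O t * (Kstar - X t) * (O t)ᵀ * (NormedSpace.exp (L t) * U t)).trace := by
        rw [← Matrix.mul_assoc, Matrix.trace_mul_comm]
        simp only [Matrix.mul_assoc]
      have hAKA : O t * (Kstar - X t) * (O t)ᵀ = -(B1 t) := by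
        rw [hX, hB1]
        have h6 : O t * ((O t)ᵀ * NormedSpace.exp (L t) * O t) * (O t)ᵀ
            = (O t * (O t)ᵀ) * NormedSpace.exp (L t) * (O t * (O t)ᵀ) := by
          simp only [Matrix.mul_assoc]
        rw [Matrix.mul_sub, Matrix.sub_mul, h6, hA, Matrix.one_mul, Matrix.mul_one, neg_sub]
      have hEU : NormedSpace.exp (L t) * U t = Matrix.diagonal
          (fun i => Real.exp (L t i i) * -(KU i i * Real.exp (-(L t i i)) * B1 t i i)) := by
        rw [hEdiag t ht, hUt t ht, Matrix.diagonal_mul_diagonal]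
      rw [r1, hAKA, hEU, Matrix.neg_mul, Matrix.trace_neg, stmt14_trace_mul_diagonal]
      rw [← Finset.sum_neg_distrib]
      apply Finset.sum_congr rfl
      intro i _
      have h1 := stmt14_exp_mul_exp_neg (L t i i)
      linear_combination (KU i i * B1 t i i ^ 2) * h1
    have hsum_nonneg : (0:ℝ) ≤ ∑ i, KU i i * (B1 t i i) ^ 2 :=
      Finset.sum_nonneg fun i _ => mul_nonneg (hKUpos i) (sq_nonneg _)
    linarith [h𝒦psd (B2 t), hrot, hdiagpart, hsum_nonneg]
  -- the derivative of V is nonpositive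
  have hvle : ∀ t ∈ Set.Ici (0 : ℝ), v' t ≤ 0 := by
    intro t ht
    show ((-(X' t))ᵀ * (Kstar - X t) + (Kstar - X t)ᵀ * (-(X' t))).trace ≤ 0
    rw [Matrix.trace_add]
    have e0 : ((-(X' t))ᵀ * (Kstar - X t)).trace = ((Kstar - X t)ᵀ * (-(X' t))).trace := by
      conv_rhs => rw [← Matrix.trace_transpose]
      rw [Matrix.transpose_mul, Matrix.transpose_transpose]
    have e1 : ((Kstar - X t)ᵀ * (-(X' t))).trace = -(((Kstar - X t)ᵀ * X' t).trace) := by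
      rw [Matrix.mul_neg, Matrix.trace_neg]
    rw [e0, e1]
    linarith [key t ht]
  -- V is antitone
  have hcont : ContinuousOn V (Set.Ici (0 : ℝ)) := fun s hs => (hVd s hs).continuousWithinAt
  have hanti : AntitoneOn V (Set.Ici (0 : ℝ)) := by
    apply antitoneOn_of_deriv_nonpos (convex_Ici 0) hcont
    · intro x hx
      rw [interior_Ici] at hx
      exact ((hVd x (Set.mem_Ici.mpr (le_of_lt hx))).hasDerivAt
        (Ici_mem_nhds hx)).differentiableAt.differentiableWithinAt
    · intro x hx
      rw [interior_Ici] at hx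
      have hd := (hVd x (Set.mem_Ici.mpr (le_of_lt hx))).hasDerivAt (Ici_mem_nhds hx)
      rw [hd.deriv]
      exact hvle x (Set.mem_Ici.mpr (le_of_lt hx))
  -- conclude
  intro t ht
  have hV0 : V 0 = 0 := by
    show ((Kstar - X 0)ᵀ * (Kstar - X 0)).trace = 0
    rw [hX0, sub_self]
    simp
  have h1 : V t ≤ 0 := by
    have h := hanti Set.self_mem_Ici ht ht
    rw [hV0] at h
    exact h
  have h2 : (0:ℝ) ≤ V t := stmt14_trace_transpose_mul_self_nonneg _
  have h3 : Kstar - X t = 0 := stmt14_eq_zero_of_trace _ (le_antisymm h1 h2)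
  exact (sub_eq_zero.mp h3).symm
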